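/- arXiv:2105.10590 — 3 statements merged into one kernel-verified Lean document; each statement's English description precedes it below -/
import Mathlib

section
/- Elliptical potential identity: Let V₀ ∈ ℝ^{d×d} be positive definite, let x₁,…,xₙ ∈ ℝ^d, and set Vₛ = V₀ + Σ_{i≤s} xᵢxᵢᵀ. Then Σ_{s=1}^n log(1 + ‖xₛ‖²_{V_{s-1}^{-1}}) = log(det(Vₙ)/det(V₀)), where ‖x‖²_A = xᵀAx. -/
open Matrix Finset

private lemma vecMulVec_posSemidef {d : ℕ} (u : Fin d → ℝ) :
    (vecMulVec u u).PosSemidef := by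
  rw [posSemidef_iff_dotProduct_mulVec]
  constructor
  · ext i j
    simp [vecMulVec_apply, conjTranspose_apply, mul_comm]
  · intro y
    have h : vecMulVec u u *ᵥ y = (u ⬝ᵥ y) • u := by
      ext i
      simp [mulVec, vecMulVec_apply, dotProduct, Finset.mul_sum, mul_comm, mul_left_comm, mul_assoc]
    rw [h]
    simp only [dotProduct_smul, star_trivial, RCLike.smul_re]
    have : y ⬝ᵥ u = u ⬝ᵥ y := dotProduct_comm _ _
    simp only [smul_eq_mul, this]
    exact mul_self_nonneg _

private lemma sum_vecMulVec_posSemidef {d : ℕ} {ι : Type*} (s : Finset ι)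
    (u : ι → Fin d → ℝ) :
    (∑ i ∈ s, vecMulVec (u i) (u i)).PosSemidef := by
  classical
  induction s using Finset.induction with
  | empty => simpa using Matrix.PosSemidef.zero
  | insert _ _ h ih =>
    rw [Finset.sum_insert h]
    exact (vecMulVec_posSemidef _).add ih

/-- Elliptical potential identity:
`Σ_{s=1}^n log(1 + ‖x_s‖²_{V_{s-1}⁻¹}) = log(det Vₙ / det V₀)` where
`V_s = V₀ + Σ_{i ≤ s} xᵢ xᵢᵀ`. -/
theorem elliptical_potential_identity (d n : ℕ)
    (V0 : Matrix (Fin d) (Fin d) ℝ) (hV0 : V0.PosDef)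
    (x : Fin n → Fin d → ℝ)
    (V : ℕ → Matrix (Fin d) (Fin d) ℝ)
    (hV : ∀ s : ℕ, V s = V0 +
      ∑ i ∈ Finset.univ.filter (fun i : Fin n => (i : ℕ) < s), vecMulVec (x i) (x i)) :
    ∑ s : Fin n, Real.log (1 + x s ⬝ᵥ (V (s : ℕ))⁻¹ *ᵥ x s)
      = Real.log ((V n).det / V0.det) := by
  have hPD : ∀ s : ℕ, (V s).PosDef := by
    intro s
    rw [hV s]
    exact hV0.add_posSemidef (sum_vecMulVec_posSemidef _ _)
  -- step identity
  have hstep : ∀ s : Fin n,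
      Real.log (1 + x s ⬝ᵥ (V (s : ℕ))⁻¹ *ᵥ x s)
        = Real.log ((V ((s : ℕ) + 1)).det) - Real.log ((V (s : ℕ)).det) := by
    intro s
    have hVs : V ((s : ℕ) + 1) = V (s : ℕ) + vecMulVec (x s) (x s) := by
      rw [hV, hV, add_assoc]
      congr 1
      have : Finset.univ.filter (fun i : Fin n => (i : ℕ) < (s : ℕ) + 1)
          = insert s (Finset.univ.filter (fun i : Fin n => (i : ℕ) < (s : ℕ))) := by
        ext i
        simp [Nat.lt_succ_iff, Fin.ext_iff, le_iff_lt_or_eq, or_comm]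
      rw [this, Finset.sum_insert (by simp)]
      rw [add_comm]
    have hdet : (V ((s : ℕ) + 1)).det
        = (V (s : ℕ)).det * (1 + x s ⬝ᵥ (V (s : ℕ))⁻¹ *ᵥ x s) := by
      rw [hVs, vecMulVec_eq Unit (x s) (x s),
        det_add_replicateCol_mul_replicateRow (hPD (s : ℕ)).det_pos.ne'.isUnit]
      congr 1
      rw [det_unique]
      simp [Matrix.mul_apply, Matrix.one_apply, dotProduct, mulVec, Finset.mul_sum,
        Finset.sum_mul, mul_comm, mul_left_comm, mul_assoc]
      have hsym : ∀ i j, (V (s : ℕ))⁻¹ i j = (V (s : ℕ))⁻¹ j i := by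
        intro i j
        conv_lhs => rw [← ((hPD (s : ℕ)).inv).isHermitian.eq]
        simp [conjTranspose_apply]
      exact Finset.sum_congr rfl fun a _ => Finset.sum_congr rfl fun b _ => by rw [hsym b a]
    have hq : 0 < 1 + x s ⬝ᵥ (V (s : ℕ))⁻¹ *ᵥ x s := by
      have := ((hPD (s : ℕ)).inv).posSemidef.dotProduct_mulVec_nonneg (x s)
      simp only [star_trivial] at this
      positivity
    rw [hdet, Real.log_mul (hPD (s : ℕ)).det_pos.ne' hq.ne']
    ring
  have hV0' : V 0 = V0 := by
    rw [hV 0]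
    have : Finset.univ.filter (fun i : Fin n => (i : ℕ) < 0) = ∅ := by simp
    simp [this]
  set g : ℕ → ℝ := fun k => Real.log ((V k).det) with hg
  calc ∑ s : Fin n, Real.log (1 + x s ⬝ᵥ (V (s : ℕ))⁻¹ *ᵥ x s)
      = ∑ s : Fin n, (g ((s : ℕ) + 1) - g (s : ℕ)) := Finset.sum_congr rfl (fun s _ => hstep s)
    _ = ∑ i ∈ Finset.range n, (g (i + 1) - g i) :=
        Fin.sum_univ_eq_sum_range (fun i => g (i + 1) - g i) n
    _ = g n - g 0 := Finset.sum_range_sub g n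
    _ = Real.log ((V n).det / V0.det) := by
        rw [hg]
        simp only [hV0']
        rw [Real.log_div (hPD n).det_pos.ne' hV0.det_pos.ne']
end

section
/- Misspecification bias bound: Suppose ε_1,…,ε_n ∈ ℝ satisfy |ε_i| ≤ ε, and x_1,…,x_n ∈ ℝ^d. Let V = λI + Σ_{i=1}^n x_i x_iᵀ with λ > 0. Then ‖Σ_{i=1}^n x_i ε_i‖_{V^{-1}} ≤ √n · ε, where ‖y‖_{V^{-1}} = √(yᵀV^{-1}y). -/
open Matrix

lemma sum_mulVec'' {d n : ℕ} (M : Fin n → Matrix (Fin d) (Fin d) ℝ) (v : Fin d → ℝ) :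
    (∑ i, M i) *ᵥ v = ∑ i, M i *ᵥ v := by
  ext j
  simp only [Matrix.mulVec, dotProduct, Matrix.sum_apply, Finset.sum_mul, Finset.sum_apply]
  exact Finset.sum_comm

lemma dotProduct_sum'' {d n : ℕ} (v : Fin d → ℝ) (w : Fin n → Fin d → ℝ) :
    v ⬝ᵥ (∑ i, w i) = ∑ i, v ⬝ᵥ w i := by
  simp only [dotProduct, Finset.sum_apply, Finset.mul_sum]
  exact Finset.sum_comm

lemma vecMulVec_mulVec' {d : ℕ} (w v : Fin d → ℝ) :
    vecMulVec w w *ᵥ v = (w ⬝ᵥ v) • w := by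
  ext i
  simp [Matrix.mulVec, Matrix.vecMulVec_apply, dotProduct, Finset.mul_sum,
    mul_comm, mul_assoc, mul_left_comm]

/-- Misspecification bias bound: if `|ε_i| ≤ ε` and `V = λI + Σ x_i x_iᵀ`, then
`‖Σ x_i ε_i‖_{V⁻¹} ≤ √n · ε`. -/
theorem misspecification_bias_bound (d n : ℕ) (lam ε : ℝ) (hlam : 0 < lam)
    (eps : Fin n → ℝ) (heps : ∀ i, |eps i| ≤ ε)
    (x : Fin n → Fin d → ℝ) :
    Real.sqrt ((∑ i, eps i • x i) ⬝ᵥ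
        (lam • (1 : Matrix (Fin d) (Fin d) ℝ) + ∑ i, vecMulVec (x i) (x i))⁻¹ *ᵥ
        (∑ i, eps i • x i))
      ≤ Real.sqrt n * ε := by
  rcases Nat.eq_zero_or_pos n with hn | hn
  · subst hn
    simp
  have hε : 0 ≤ ε := le_trans (abs_nonneg _) (heps ⟨0, hn⟩)
  set V : Matrix (Fin d) (Fin d) ℝ := lam • 1 + ∑ i, vecMulVec (x i) (x i) with hVdef
  set y : Fin d → ℝ := ∑ i, eps i • x i with hydef
  -- quadratic form of V
  have hquad : ∀ v : Fin d → ℝ, v ⬝ᵥ V *ᵥ v = lam * (v ⬝ᵥ v) + ∑ i, (x i ⬝ᵥ v) ^ 2 := by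
    intro v
    rw [hVdef, Matrix.add_mulVec, Matrix.smul_mulVec, Matrix.one_mulVec,
      dotProduct_add, dotProduct_smul, smul_eq_mul]
    congr 1
    rw [sum_mulVec'', dotProduct_sum'']
    refine Finset.sum_congr rfl fun i _ => ?_
    rw [vecMulVec_mulVec', dotProduct_smul, smul_eq_mul, dotProduct_comm, sq]
  -- V is positive definite
  have hVpd : V.PosDef := by
    rw [Matrix.posDef_iff_dotProduct_mulVec]
    constructor
    · have hsym : ∀ w : Fin d → ℝ, (vecMulVec w w)ᴴ = vecMulVec w w := by
        intro w
        ext i j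
        simp [Matrix.vecMulVec_apply, Matrix.conjTranspose_apply, mul_comm]
      show Vᴴ = V
      have hsum : (∑ i, vecMulVec (x i) (x i))ᴴ = ∑ i, vecMulVec (x i) (x i) := by
        rw [Matrix.conjTranspose_sum]
        exact Finset.sum_congr rfl fun i _ => hsym (x i)
      rw [hVdef, Matrix.conjTranspose_add, Matrix.conjTranspose_smul, hsum,
        Matrix.conjTranspose_one]
      norm_num
    · intro v hv
      have h1 : 0 < v ⬝ᵥ v := by
        have h2 : v ⬝ᵥ v = ∑ j, v j ^ 2 := by simp [dotProduct, sq]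
        rw [h2]
        obtain ⟨j, hj⟩ := Function.ne_iff.mp hv
        exact Finset.sum_pos' (fun j _ => sq_nonneg _)
          ⟨j, Finset.mem_univ j, lt_of_le_of_ne (sq_nonneg _) (Ne.symm (pow_ne_zero 2 hj))⟩
      have hq := hquad v
      have h3 : (0:ℝ) ≤ ∑ i, (x i ⬝ᵥ v) ^ 2 :=
        Finset.sum_nonneg fun i _ => sq_nonneg _
      simp only [RCLike.star_def, starRingEnd_apply, star_trivial]
      show (0:ℝ) < v ⬝ᵥ V *ᵥ v
      rw [hq]
      nlinarith
  have hdet : IsUnit V.det := (Matrix.isUnit_iff_isUnit_det V).mp hVpd.isUnit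
  set z : Fin d → ℝ := V⁻¹ *ᵥ y with hzdef
  have hVz : V *ᵥ z = y := by
    rw [hzdef, Matrix.mulVec_mulVec, Matrix.mul_nonsing_inv V hdet, Matrix.one_mulVec]
  set S : ℝ := y ⬝ᵥ V⁻¹ *ᵥ y with hSdef
  have hSz : S = y ⬝ᵥ z := by rw [hSdef, hzdef]
  have hSnn : 0 ≤ S := by
    have := hVpd.inv.posSemidef.re_dotProduct_nonneg y
    simpa [hSdef] using this
  -- S = ∑ eps i * (x i ⬝ᵥ z)
  have h1 : S = ∑ i, eps i * (x i ⬝ᵥ z) := by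
    rw [hSz, hydef]
    simp only [dotProduct, Finset.sum_apply, Pi.smul_apply, smul_eq_mul,
      Finset.sum_mul, Finset.mul_sum, mul_assoc]
    exact Finset.sum_comm
  -- ∑ (x i ⬝ᵥ z)^2 ≤ S
  have hq := hquad z
  rw [hVz] at hq
  have hzz : 0 ≤ z ⬝ᵥ z := Finset.sum_nonneg fun j _ => mul_self_nonneg _
  have hSz' : S = z ⬝ᵥ y := by rw [hSz, dotProduct_comm]
  clear_value V y z S
  have h2 : ∑ i, (x i ⬝ᵥ z) ^ 2 ≤ S := by nlinarith
  -- Cauchy-Schwarz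
  have hcs : S ^ 2 ≤ (∑ i, eps i ^ 2) * ∑ i, (x i ⬝ᵥ z) ^ 2 := by
    rw [h1]
    exact Finset.sum_mul_sq_le_sq_mul_sq _ _ _
  have hE : ∑ i, eps i ^ 2 ≤ n * ε ^ 2 := by
    calc ∑ i, eps i ^ 2 ≤ ∑ _i : Fin n, ε ^ 2 := by
          refine Finset.sum_le_sum fun i _ => ?_
          have := abs_le.mp (heps i)
          nlinarith
      _ = n * ε ^ 2 := by simp [Finset.sum_const]
  have hEnn : 0 ≤ ∑ i, eps i ^ 2 := Finset.sum_nonneg fun i _ => sq_nonneg _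
  have hSle : S ≤ n * ε ^ 2 := by
    rcases eq_or_lt_of_le hSnn with h | h
    · rw [← h]; positivity
    · have h4 : S ^ 2 ≤ (∑ i, eps i ^ 2) * S :=
        le_trans hcs (mul_le_mul_of_nonneg_left h2 hEnn)
      nlinarith
  calc Real.sqrt S ≤ Real.sqrt (n * ε ^ 2) := Real.sqrt_le_sqrt hSle
    _ = Real.sqrt n * ε := by
        rw [Real.sqrt_mul (by positivity), Real.sqrt_sq hε]
end

section
/- If A ⪰ B ≻ 0 are symmetric d×d matrices and det(A) ≤ 2 det(B), then for all θ ∈ ℝ^d, ‖θ‖_A ≤ √2 · ‖θ‖_B, where ‖θ‖_M = √(θᵀMθ). -/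
open Matrix

/-- An eigenvector has unit dot product with itself. -/
lemma aux_eigvec_dot {d : ℕ} {M : Matrix (Fin d) (Fin d) ℝ} (hM : M.IsHermitian) (i : Fin d) :
    (⇑(hM.eigenvectorBasis i) : Fin d → ℝ) ⬝ᵥ ⇑(hM.eigenvectorBasis i) = 1 := by
  have h1 : ‖hM.eigenvectorBasis i‖ = 1 := hM.eigenvectorBasis.orthonormal.1 i
  have h2 : (inner ℝ (hM.eigenvectorBasis i) (hM.eigenvectorBasis i) : ℝ) = 1 := by
    rw [real_inner_self_eq_norm_sq, h1]; norm_num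
  rw [EuclideanSpace.inner_eq_star_dotProduct] at h2
  simpa [dotProduct, mul_comm] using h2

/-- Eigenvalues are at least one when `M - 1` is PSD. -/
lemma aux_eig_ge_one {d : ℕ} {M : Matrix (Fin d) (Fin d) ℝ} (hM : M.IsHermitian)
    (hP : (M - 1).PosSemidef) (i : Fin d) : 1 ≤ hM.eigenvalues i := by
  have h0 := hP.dotProduct_mulVec_nonneg (⇑(hM.eigenvectorBasis i))
  set v : Fin d → ℝ := ⇑(hM.eigenvectorBasis i) with hv
  have hmv : M *ᵥ v = hM.eigenvalues i • v := hM.mulVec_eigenvectorBasis i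
  have hvv : v ⬝ᵥ v = 1 := aux_eigvec_dot hM i
  rw [sub_mulVec, dotProduct_sub, hmv, one_mulVec] at h0
  simp only [star_trivial, dotProduct_smul, smul_eq_mul, hvv, mul_one] at h0
  linarith

/-- If a Hermitian matrix has all eigenvalues at most `c`, then `c • 1 - M` is PSD. -/
lemma aux_smul_one_sub_posSemidef {d : ℕ} {M : Matrix (Fin d) (Fin d) ℝ} (hM : M.IsHermitian)
    (c : ℝ) (h : ∀ i, hM.eigenvalues i ≤ c) :
    (c • (1 : Matrix (Fin d) (Fin d) ℝ) - M).PosSemidef := by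
  set U : Matrix (Fin d) (Fin d) ℝ := (hM.eigenvectorUnitary : Matrix (Fin d) (Fin d) ℝ) with hU
  have hUU : U * star U = 1 := (Matrix.mem_unitaryGroup_iff).mp hM.eigenvectorUnitary.2
  have hdiag : diagonal (fun i => c - hM.eigenvalues i)
      = c • (1 : Matrix (Fin d) (Fin d) ℝ) - diagonal (RCLike.ofReal ∘ hM.eigenvalues) := by
    rw [smul_one_eq_diagonal, diagonal_sub]
    congr 1
  have key : c • (1 : Matrix (Fin d) (Fin d) ℝ) - M
      = U * diagonal (fun i => c - hM.eigenvalues i) * star U := by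
    rw [hdiag, mul_sub, sub_mul, Matrix.mul_smul, mul_one, smul_mul_assoc, hUU]
    congr 1
    exact hM.spectral_theorem
  rw [key]
  exact (Matrix.PosSemidef.diagonal (fun i => sub_nonneg.mpr (h i))).mul_mul_conjTranspose_same U

/-- Non-doubling round condition: if `A ⪰ B ≻ 0` and `det A ≤ 2 det B`, then
`‖θ‖_A ≤ √2 ‖θ‖_B` for all `θ`. -/
theorem norm_le_sqrt_two_norm_of_det_le (d : ℕ)
    (A B : Matrix (Fin d) (Fin d) ℝ) (hA : A.IsHermitian) (hB : B.PosDef)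
    (hAB : (A - B).PosSemidef) (hdet : A.det ≤ 2 * B.det)
    (θ : Fin d → ℝ) :
    Real.sqrt (θ ⬝ᵥ A *ᵥ θ) ≤ Real.sqrt 2 * Real.sqrt (θ ⬝ᵥ B *ᵥ θ) := by
  -- a positive semidefinite square root of B
  obtain ⟨S, hS, hSS⟩ : ∃ S : Matrix (Fin d) (Fin d) ℝ, S.PosSemidef ∧ S * S = B :=
    open scoped MatrixOrder in
    ⟨CFC.sqrt B, Matrix.nonneg_iff_posSemidef.mp (CFC.sqrt_nonneg B),
      CFC.sqrt_mul_sqrt_self B (Matrix.nonneg_iff_posSemidef.mpr hB.posSemidef)⟩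
  have hBdet : 0 < B.det := hB.det_pos
  have hdet2 : S.det * S.det = B.det := by rw [← det_mul, hSS]
  have hSdet : IsUnit S.det := by
    refine isUnit_iff_ne_zero.mpr fun h0 => ?_
    rw [h0, mul_zero] at hdet2
    exact hBdet.ne' hdet2.symm
  set T := S⁻¹ with hTdef
  have hST : S * T = 1 := Matrix.mul_nonsing_inv S hSdet
  have hTS : T * S = 1 := Matrix.nonsing_inv_mul S hSdet
  have hTH : Tᴴ = T := by
    rw [hTdef, Matrix.conjTranspose_nonsing_inv, hS.1]
  set M := T * A * T with hMdef
  have hM : M.IsHermitian := by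
    show Mᴴ = M
    rw [hMdef, conjTranspose_mul, conjTranspose_mul, hTH, hA, ← mul_assoc]
  -- M - 1 is PSD
  have hM1 : (M - 1).PosSemidef := by
    have heq : T * (A - B) * Tᴴ = M - 1 := by
      rw [hTH, mul_sub, sub_mul, hMdef]
      congr 1
      calc T * B * T = T * (S * (S * T)) := by rw [← hSS]; simp only [mul_assoc]
        _ = 1 := by rw [hST, mul_one, hTS]
    rw [← heq]
    exact hAB.mul_mul_conjTranspose_same T
  have heig1 : ∀ i, 1 ≤ hM.eigenvalues i := aux_eig_ge_one hM hM1
  -- det M ≤ 2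
  have hdetTS : T.det * S.det = 1 := by rw [← det_mul, hTS, det_one]
  have hMdet : M.det * B.det = A.det := by
    rw [hMdef, ← hdet2, det_mul, det_mul]
    calc T.det * A.det * T.det * (S.det * S.det)
        = (T.det * S.det) * (T.det * S.det) * A.det := by ring
      _ = A.det := by rw [hdetTS]; ring
  have hdetM : M.det ≤ 2 := by
    have h2 : M.det * B.det ≤ 2 * B.det := by rw [hMdet]; exact hdet
    exact le_of_mul_le_mul_right h2 hBdet
  -- each eigenvalue of M is at most 2
  have heig2 : ∀ i, hM.eigenvalues i ≤ 2 := by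
    intro j
    have hprod : ∏ i, hM.eigenvalues i = M.det := by
      have := hM.det_eq_prod_eigenvalues
      simpa using this.symm
    have hrest : 1 ≤ ∏ i ∈ Finset.univ.erase j, hM.eigenvalues i := by
      have := Finset.prod_le_prod (s := Finset.univ.erase j)
        (f := fun _ => (1:ℝ)) (g := hM.eigenvalues)
        (fun i _ => by norm_num) (fun i _ => heig1 i)
      simpa using this
    have hsplit : hM.eigenvalues j * ∏ i ∈ Finset.univ.erase j, hM.eigenvalues i
        = ∏ i, hM.eigenvalues i := Finset.mul_prod_erase _ _ (Finset.mem_univ j)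
    calc hM.eigenvalues j
        ≤ hM.eigenvalues j * ∏ i ∈ Finset.univ.erase j, hM.eigenvalues i :=
          le_mul_of_one_le_right (by linarith [heig1 j]) hrest
      _ = M.det := by rw [hsplit, hprod]
      _ ≤ 2 := hdetM
  -- 2 • 1 - M is PSD, conjugate back
  have hN : ((2:ℝ) • (1 : Matrix (Fin d) (Fin d) ℝ) - M).PosSemidef :=
    aux_smul_one_sub_posSemidef hM 2 heig2
  have hfinal : ((2:ℝ) • B - A).PosSemidef := by
    have hconj := hN.mul_mul_conjTranspose_same S
    have heq : S * ((2:ℝ) • (1 : Matrix (Fin d) (Fin d) ℝ) - M) * Sᴴ = (2:ℝ) • B - A := by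
      rw [hS.1, mul_sub, sub_mul]
      congr 1
      · rw [Matrix.mul_smul, mul_one, smul_mul_assoc, hSS]
      · rw [hMdef]
        calc S * (T * A * T) * S = S * T * (A * (T * S)) := by simp only [mul_assoc]
          _ = A := by rw [hTS, mul_one, hST, one_mul]
    rwa [heq] at hconj
  -- conclude
  have hquad : θ ⬝ᵥ A *ᵥ θ ≤ 2 * (θ ⬝ᵥ B *ᵥ θ) := by
    have h0 := hfinal.dotProduct_mulVec_nonneg θ
    simp only [star_trivial, sub_mulVec, dotProduct_sub, smul_mulVec,
      dotProduct_smul, smul_eq_mul] at h0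
    linarith
  calc Real.sqrt (θ ⬝ᵥ A *ᵥ θ) ≤ Real.sqrt (2 * (θ ⬝ᵥ B *ᵥ θ)) := Real.sqrt_le_sqrt hquad
    _ = Real.sqrt 2 * Real.sqrt (θ ⬝ᵥ B *ᵥ θ) := Real.sqrt_mul (by norm_num) _
end
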